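/- Let 0 < μ < L, Q = L/μ > 1, α = 1/L, β = (√Q − 1)/(√Q + 1), r = (√Q − 1)/√Q, and B(μ) = [[1 − α(1+β)μ, β²], [−αμ, β]]. Then for every integer k ≥ 1, B(μ)^k = [[(1 + k/(√Q + 1)) r^k, k((√Q − 1)/(√Q + 1))² r^{k−1}], [−(k/Q) r^{k−1}, (1 − k/(√Q + 1)) r^k]]. -/

import Mathlib

open Matrix

/-- The 2×2 matrix `B(λ)` from the analysis of Nesterov's method. -/
noncomputable def Bmat (α β lam : ℝ) : Matrix (Fin 2) (Fin 2) ℝ :=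
  !![1 - α * (1 + β) * lam, β ^ 2; -(α * lam), β]

lemma key (s μ Q α β r : ℝ) (hs1 : 1 < s) (hμ : 0 < μ) (hQ : Q = s ^ 2)
    (hαμ : α * μ = 1 / Q) (hβ : β = (s - 1) / (s + 1)) (hr : r = (s - 1) / s) :
    ∀ n : ℕ, (Bmat α β μ) ^ (n + 1) =
      !![(1 + ((n : ℝ) + 1) / (s + 1)) * r ^ (n + 1),
           ((n : ℝ) + 1) * ((s - 1) / (s + 1)) ^ 2 * r ^ n;
         -(((n : ℝ) + 1) / Q) * r ^ n,
           (1 - ((n : ℝ) + 1) / (s + 1)) * r ^ (n + 1)] := by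
  have hs0 : (0 : ℝ) < s := lt_trans one_pos hs1
  have hs0' : s ≠ 0 := ne_of_gt hs0
  have hs1' : s + 1 ≠ 0 := by positivity
  have hμ' : μ ≠ 0 := ne_of_gt hμ
  subst hQ hβ hr
  have hα : α = 1 / (s ^ 2 * μ) := by
    field_simp at hαμ ⊢
    linarith
  subst hα
  intro n
  induction n with
  | zero =>
    ext i j
    fin_cases i <;> fin_cases j <;>
      simp [Bmat] <;> field_simp <;> ring
  | succ n ih =>
    rw [pow_succ, ih]
    ext i j
    fin_cases i <;> fin_cases j <;>
      · simp [Bmat, Matrix.mul_apply, Fin.sum_univ_two]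
        simp only [div_pow]
        field_simp
        ring

/-- With `α = 1/L`, `β = (√Q−1)/(√Q+1)`, `r = (√Q−1)/√Q`, for every
`k ≥ 1`:
`B(μ)^k = [[(1 + k/(√Q+1)) rᵏ, k((√Q−1)/(√Q+1))² r^{k−1}],
           [−(k/Q) r^{k−1}, (1 − k/(√Q+1)) rᵏ]]`. -/
theorem stmt17 (μ L : ℝ) (hμ : 0 < μ) (hμL : μ < L)
    (Q : ℝ) (hQ : Q = L / μ) (hQ1 : 1 < Q)
    (α β r : ℝ) (hα : α = 1 / L) (hβ : β = (Real.sqrt Q - 1) / (Real.sqrt Q + 1))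
    (hr : r = (Real.sqrt Q - 1) / Real.sqrt Q) :
    ∀ k : ℕ, 1 ≤ k →
      (Bmat α β μ) ^ k =
        !![(1 + (k : ℝ) / (Real.sqrt Q + 1)) * r ^ k,
             (k : ℝ) * ((Real.sqrt Q - 1) / (Real.sqrt Q + 1)) ^ 2 * r ^ (k - 1);
           -((k : ℝ) / Q) * r ^ (k - 1),
             (1 - (k : ℝ) / (Real.sqrt Q + 1)) * r ^ k] := by
  have hQ0 : (0 : ℝ) < Q := lt_trans one_pos hQ1
  have hs1 : 1 < Real.sqrt Q := by
    rw [show (1 : ℝ) = Real.sqrt 1 from Real.sqrt_one.symm]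
    exact Real.sqrt_lt_sqrt (by norm_num) hQ1
  have hsq : Q = Real.sqrt Q ^ 2 := (Real.sq_sqrt hQ0.le).symm
  have hL : L ≠ 0 := ne_of_gt (lt_trans hμ hμL)
  have hαμ : α * μ = 1 / Q := by
    rw [hα, hQ]; field_simp
  intro k hk
  obtain ⟨n, rfl⟩ : ∃ n, k = n + 1 := ⟨k - 1, (Nat.succ_pred_eq_of_pos hk).symm⟩
  have h := key (Real.sqrt Q) μ Q α β r hs1 hμ hsq hαμ hβ hr n
  simp only [Nat.add_sub_cancel]
  push_cast
  exact h
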